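/- Let g be a positive-definite 3×3 real symmetric matrix, g8 a positive-definite 8×8 real symmetric matrix, c, A ∈ ℝ, and set f := (1 + A·c)² + A²·det g (which is automatically positive). Then U_Ω(A)ᵀ · M_C(g, g8, c) · U_Ω(A) = M_C( f^(−2/3)·g, f^(1/3)·g8, (c·(1 + A·c) + A·det g)/f ). This is the action of the spacelike Ω-shift duality on the metric and 3-form. -/

import Mathlib

open Matrix

/-- The (g,C)-frame generalised metric: a 14×14 matrix in 3+3+8 block form. -/
noncomputable def MC (g : Matrix (Fin 3) (Fin 3) ℝ) (g8 : Matrix (Fin 8) (Fin 8) ℝ) (c : ℝ) :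
    Matrix ((Fin 3 ⊕ Fin 3) ⊕ Fin 8) ((Fin 3 ⊕ Fin 3) ⊕ Fin 8) ℝ :=
  |g.det * g8.det| ^ (-(1 : ℝ) / 2) •
    fromBlocks
      (fromBlocks ((1 + c ^ 2 / g.det) • g) ((c / g.det) • g) ((c / g.det) • g)
        ((1 / g.det) • g))
      0 0 g8

/-- The Ω-shift duality matrix: [[1, A·1], [0, 1]] on the first 6 coordinates,
identity on the 8 transverse coordinates. -/
def UOmega (A : ℝ) : Matrix ((Fin 3 ⊕ Fin 3) ⊕ Fin 8) ((Fin 3 ⊕ Fin 3) ⊕ Fin 8) ℝ :=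
  fromBlocks (fromBlocks 1 (A • 1) 0 1) 0 0 1

set_option maxRecDepth 8000 in
/-- Spacelike Ω-shift: for positive-definite g, g8 and f := (1+A·c)² + A²·det g,
U_Ω(A)ᵀ·M_C(g,g8,c)·U_Ω(A) = M_C(f^(−2/3)·g, f^(1/3)·g8, (c·(1+A·c)+A·det g)/f). -/
theorem stmt_9 (g : Matrix (Fin 3) (Fin 3) ℝ) (g8 : Matrix (Fin 8) (Fin 8) ℝ)
    (hg : g.PosDef) (hg8 : g8.PosDef) (c A : ℝ) :
    (UOmega A)ᵀ * MC g g8 c * UOmega A =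
      MC (((1 + A * c) ^ 2 + A ^ 2 * g.det) ^ (-(2 : ℝ) / 3) • g)
        (((1 + A * c) ^ 2 + A ^ 2 * g.det) ^ ((1 : ℝ) / 3) • g8)
        ((c * (1 + A * c) + A * g.det) / ((1 + A * c) ^ 2 + A ^ 2 * g.det)) := by
  have hD : (0:ℝ) < g.det := hg.det_pos
  have hD8 := hg8.det_pos
  set f : ℝ := (1 + A * c) ^ 2 + A ^ 2 * g.det with hfdef
  have hf : 0 < f := by
    rcases eq_or_ne A 0 with h | h
    · simp [hfdef, h]
    · nlinarith [sq_nonneg (1 + A * c), sq_pos_of_ne_zero h, mul_pos (sq_pos_of_ne_zero h) hD]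
  set t : ℝ := f ^ ((1:ℝ)/3) with htdef
  have ht : 0 < t := Real.rpow_pos_of_pos hf _
  have ht3 : t ^ 3 = f := by
    rw [htdef, ← Real.rpow_natCast (f ^ ((1:ℝ)/3)) 3, ← Real.rpow_mul hf.le]; norm_num
  have e23 : f ^ (-(2:ℝ)/3) = (t ^ 2)⁻¹ := by
    rw [htdef, ← Real.rpow_natCast (f ^ ((1:ℝ)/3)) 2, ← Real.rpow_mul hf.le,
      ← Real.rpow_neg hf.le]
    norm_num
  have hdet1 : ((t ^ 2)⁻¹ • g).det = (t^2)⁻¹ ^ 3 * g.det := by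
    simp [Matrix.det_smul]
  have hdet8 : (t • g8).det = t ^ 8 * g8.det := by
    simp [Matrix.det_smul]
  have habs : |(t^2)⁻¹ ^ 3 * g.det * (t ^ 8 * g8.det)| = t^2 * |g.det * g8.det| := by
    have h1 : (t^2)⁻¹ ^ 3 * g.det * (t ^ 8 * g8.det) = t^2 * (g.det * g8.det) := by
      field_simp
    rw [h1, abs_mul, abs_of_nonneg (by positivity : (0:ℝ) ≤ t^2)]
  have hcoef : (t^2 * |g.det * g8.det|) ^ (-(1:ℝ)/2)
      = t⁻¹ * |g.det * g8.det| ^ (-(1:ℝ)/2) := by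
    rw [Real.mul_rpow (by positivity) (abs_nonneg _)]
    congr 1
    rw [← Real.rpow_natCast t 2, ← Real.rpow_mul ht.le]
    norm_num [Real.rpow_neg_one]
  rw [e23]
  simp only [MC, UOmega, hdet1, hdet8, habs, hcoef, Matrix.fromBlocks_transpose,
    Matrix.transpose_one, Matrix.transpose_zero, Matrix.transpose_smul,
    Matrix.mul_smul, Matrix.smul_mul, Matrix.fromBlocks_multiply,
    Matrix.fromBlocks_smul, Matrix.one_mul, Matrix.mul_one, Matrix.mul_zero,
    Matrix.zero_mul, add_zero, zero_add, smul_smul, smul_zero, Matrix.add_mul,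
    mul_one, one_mul, ← add_smul]
  set s : ℝ := |g.det * g8.det| ^ (-(1:ℝ) / 2) with hsdef
  have hDne : g.det ≠ 0 := hD.ne'
  have hfne : f ≠ 0 := hf.ne'
  have htne : t ≠ 0 := ht.ne'
  have h6 : (t ^ 2)⁻¹ ^ 3 = (f ^ 2)⁻¹ := by rw [← ht3]; ring
  have elim : ∀ X : ℝ, t⁻¹ * s * (X * (t ^ 2)⁻¹) = s * f⁻¹ * X := by
    intro X; rw [← ht3]; ring
  rw [show A * (s * (1 + c ^ 2 / g.det)) + s * (c / g.det)
        = s * (1 + c ^ 2 / g.det) * A + s * (c / g.det) from by ring]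
  rw [show t⁻¹ * s *
        ((1 + ((c * (1 + A * c) + A * g.det) / f) ^ 2 / ((t ^ 2)⁻¹ ^ 3 * g.det)) * (t ^ 2)⁻¹)
        = s * (1 + c ^ 2 / g.det) from by
    rw [elim, h6]; field_simp; rw [hfdef]; ring]
  rw [show t⁻¹ * s *
        ((c * (1 + A * c) + A * g.det) / f / ((t ^ 2)⁻¹ ^ 3 * g.det) * (t ^ 2)⁻¹)
        = s * (1 + c ^ 2 / g.det) * A + s * (c / g.det) from by
    rw [elim, h6]; field_simp; ring]
  rw [show t⁻¹ * s * (1 / ((t ^ 2)⁻¹ ^ 3 * g.det) * (t ^ 2)⁻¹)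
        = A * (s * (1 + c ^ 2 / g.det) * A + s * (c / g.det)) +
            (s * (c / g.det) * A + s * (1 / g.det)) from by
    rw [elim, h6, hfdef]; field_simp; ring]
  rw [show t⁻¹ * s * t = s from by field_simp]
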